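/- Let Z be a measurable space, D a probability distribution on Z, W ⊆ ℝ^d convex, f : W × Z → ℝ measurable, bounded, with f(·, z) convex and G-Lipschitz with respect to the Euclidean norm for every z, and define the population risk F(w) = E_{z ~ D}[ f(w, z) ]. Let Ψ : W → ℝ be 1-strongly convex with respect to the Euclidean norm and satisfy 0 ≤ Ψ(w) ≤ B for all w ∈ W. For a sample S = (z_1,…,z_m) drawn i.i.d. from D, let RERM(S) = argmin_{w ∈ W} { (1/m) Σ_{i=1}^m f(w, z_i) + λ Ψ(w) } with λ = √(2G² / (m B)). Then E_{S ~ D^m}[ F(RERM(S)) ] ≤ inf_{w ∈ W} F(w) + √(8 G² B / m). -/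

import Mathlib

set_option maxHeartbeats 2000000

open MeasureTheory Set Function

lemma integrable_of_bdd {α : Type*} [MeasurableSpace α] {ν : Measure α} [IsFiniteMeasure ν]
    {g : α → ℝ} (hg : Measurable g) {C : ℝ} (hC : ∀ x, |g x| ≤ C) : Integrable g ν :=
  (integrable_const C).mono' hg.aestronglyMeasurable
    (Filter.Eventually.of_forall fun x => by simpa [Real.norm_eq_abs] using hC x)

lemma strong_min {E : Type*} [NormedAddCommGroup E] [NormedSpace ℝ E] {W : Set E} {c : ℝ}
    {φ : E → ℝ} (hφ : StrongConvexOn W c φ) {u : E} (hu : u ∈ W)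
    (hmin : ∀ w ∈ W, φ u ≤ φ w) {w : E} (hw : w ∈ W) :
    φ u + c / 2 * ‖u - w‖ ^ 2 ≤ φ w := by
  set K := c / 2 * ‖u - w‖ ^ 2 with hK
  have key : ∀ t : ℝ, 0 < t → t < 1 → φ u + (1 - t) * K ≤ φ w := by
    intro t ht ht1
    have h1t : (0:ℝ) ≤ 1 - t := by linarith
    have hcomb : (1 - t) • u + t • w ∈ W := hφ.1 hu hw h1t ht.le (by ring)
    have h2 := hφ.2 hu hw h1t ht.le (by ring : (1 - t) + t = 1)
    have h3 := hmin _ hcomb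
    simp only [smul_eq_mul] at h2
    rw [← hK] at h2
    nlinarith [h2, h3]
  have htend : Filter.Tendsto (fun t : ℝ => φ u + (1 - t) * K) (nhdsWithin 0 (Set.Ioi 0))
      (nhds (φ u + (1 - 0) * K)) := by
    apply Filter.Tendsto.mono_left _ nhdsWithin_le_nhds
    exact (Continuous.tendsto (by continuity) 0)
  have : φ u + (1 - 0) * K ≤ φ w := by
    refine le_of_tendsto htend ?_
    have h1 : ∀ᶠ t : ℝ in nhdsWithin 0 (Set.Ioi 0), t < 1 :=
      Filter.Eventually.filter_mono nhdsWithin_le_nhds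
        ((Filter.tendsto_id (α := ℝ)).eventually_lt_const (by norm_num))
    have h2 : ∀ᶠ t : ℝ in nhdsWithin 0 (Set.Ioi 0), 0 < t := eventually_mem_nhdsWithin
    filter_upwards [h1, h2] with t ht1 ht0
    exact key t ht0 ht1
  simpa using this

lemma measurePreserving_update_fin {Z : Type*} [MeasurableSpace Z] (μ : Measure Z)
    [IsProbabilityMeasure μ] {m : ℕ} (i : Fin m) :
    MeasurePreserving (fun p : (Fin m → Z) × Z => Function.update p.1 i p.2)
      ((Measure.pi fun _ => μ).prod μ) (Measure.pi fun _ => μ) := by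
  refine ⟨measurable_update', ?_⟩
  refine (Measure.pi_eq fun s hs => ?_).symm
  have hpre : (fun p : (Fin m → Z) × Z => Function.update p.1 i p.2) ⁻¹' (univ.pi s) =
      (univ.pi (Function.update s i univ)) ×ˢ (s i) := by
    ext ⟨S, z⟩
    simp only [mem_preimage, mem_pi, mem_univ, forall_true_left, mem_prod, true_implies]
    constructor
    · intro h
      refine ⟨fun j => ?_, by simpa using h i⟩
      rcases eq_or_ne j i with rfl | hj
      · simp
      · simpa [Function.update_of_ne hj] using h j
    · rintro ⟨h1, h2⟩ j
      rcases eq_or_ne j i with rfl | hj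
      · simpa using h2
      · simpa [Function.update_of_ne hj] using h1 j
  rw [Measure.map_apply measurable_update' (MeasurableSet.univ_pi hs), hpre,
    Measure.prod_prod, Measure.pi_pi]
  have hup : ∀ j, μ (Function.update s i univ j) =
      Function.update (fun j => μ (s j)) i (μ univ) j := fun j =>
    Function.apply_update (fun _ t => μ t) s i univ j
  rw [Finset.prod_congr rfl fun j _ => hup j, Finset.prod_update_of_mem (Finset.mem_univ i),
    measure_univ, one_mul]
  rw [Finset.sdiff_singleton_eq_erase, Finset.prod_erase_mul _ _ (Finset.mem_univ i)]

theorem rerm_generalization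
    {d : ℕ} {Z : Type*} [MeasurableSpace Z]
    (μ : Measure Z) [IsProbabilityMeasure μ]
    (W : Set (EuclideanSpace ℝ (Fin d))) (hW : Convex ℝ W) (hWne : W.Nonempty)
    (f : EuclideanSpace ℝ (Fin d) → Z → ℝ)
    (hfmeas : Measurable (Function.uncurry f))
    (C : ℝ) (hfbdd : ∀ w ∈ W, ∀ z, |f w z| ≤ C)
    (G : ℝ) (hG : 0 ≤ G)
    (hconv : ∀ z, ConvexOn ℝ W fun w => f w z)
    (hlip : ∀ z, ∀ w ∈ W, ∀ w' ∈ W, |f w z - f w' z| ≤ G * ‖w - w'‖)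
    (Ψ : EuclideanSpace ℝ (Fin d) → ℝ)
    (hΨ : StrongConvexOn W 1 Ψ)
    (B : ℝ) (hB : 0 < B)
    (hΨbdd : ∀ w ∈ W, 0 ≤ Ψ w ∧ Ψ w ≤ B)
    (m : ℕ) (hm : 0 < m)
    (lam : ℝ) (hlam : lam = Real.sqrt (2 * G ^ 2 / (m * B)))
    (RERM : (Fin m → Z) → EuclideanSpace ℝ (Fin d))
    (hRERMmeas : Measurable RERM)
    (hRERM : ∀ S : Fin m → Z, RERM S ∈ W ∧ ∀ w ∈ W,
      (1 / m : ℝ) * ∑ i, f (RERM S) (S i) + lam * Ψ (RERM S) ≤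
        (1 / m : ℝ) * ∑ i, f w (S i) + lam * Ψ w) :
    (∫ S : Fin m → Z, ∫ z, f (RERM S) z ∂μ ∂Measure.pi fun _ => μ) ≤
      (⨅ w : W, ∫ z, f (w : EuclideanSpace ℝ (Fin d)) z ∂μ) +
        Real.sqrt (8 * G ^ 2 * B / m) := by
  have hA : ∀ S, RERM S ∈ W := fun S => (hRERM S).1
  have hlam0 : 0 ≤ lam := hlam ▸ Real.sqrt_nonneg _
  have hmR : (0:ℝ) < m := by exact_mod_cast hm
  have hmne : (m:ℝ) ≠ 0 := ne_of_gt hmR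
  have hBne : B ≠ 0 := hB.ne'
  have hcanc : ∀ x : ℝ, (m:ℝ) * (1 / m * x) = x := fun x => by field_simp
  set P : Measure (Fin m → Z) := Measure.pi fun _ => μ with hP
  set PP : Measure ((Fin m → Z) × Z) := P.prod μ with hPP
  -- unnormalized ERM optimality
  have hmin' : ∀ T : Fin m → Z, ∀ w' ∈ W,
      ((∑ j, f (RERM T) (T j)) + (m:ℝ) * (lam * Ψ (RERM T))) ≤
        (∑ j, f w' (T j)) + (m:ℝ) * (lam * Ψ w') := by
    intro T w' hw'
    have h := (hRERM T).2 w' hw'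
    have h2 := mul_le_mul_of_nonneg_left h hmR.le
    rw [mul_add, mul_add, hcanc, hcanc] at h2
    exact h2
  have hlamsq : lam ^ 2 = 2 * G ^ 2 / (m * B) := by
    rw [hlam]; exact Real.sq_sqrt (by positivity)
  have e0 : lam ^ 2 * ((m:ℝ) * B) = 2 * G ^ 2 := by
    rw [hlamsq]; field_simp
  -- pointwise stability
  have hstab : ∀ (S : Fin m → Z) (i : Fin m) (z' z : Z),
      f (RERM S) z - f (RERM (Function.update S i z')) z ≤ lam * B := by
    intro S i z' z
    set S' := Function.update S i z' with hS'
    set u := RERM S with hu'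
    set v := RERM S' with hv'
    have hu : u ∈ W := hA S
    have hv : v ∈ W := hA S'
    rcases eq_or_lt_of_le hG with hG0 | hGpos
    · have h0 := hlip z u hu v hv
      rw [← hG0, zero_mul] at h0
      have h1 := le_abs_self (f u z - f v z)
      have hlb : 0 ≤ lam * B := mul_nonneg hlam0 hB.le
      linarith
    · have hlampos : 0 < lam := by
        rw [hlam]; apply Real.sqrt_pos.mpr; positivity
      -- strong convexity of the unnormalized regularized empirical objective
      have hsc : ∀ T : Fin m → Z, StrongConvexOn W ((m:ℝ) * lam)
          (fun w' => (∑ j, f w' (T j)) + (m:ℝ) * (lam * Ψ w')) := by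
        intro T
        refine ⟨hW, fun x hx y hy a b ha hb hab => ?_⟩
        have hconvpart : (∑ j, f (a • x + b • y) (T j)) ≤
            a * ∑ j, f x (T j) + b * ∑ j, f y (T j) := by
          rw [Finset.mul_sum, Finset.mul_sum, ← Finset.sum_add_distrib]
          refine Finset.sum_le_sum fun j _ => ?_
          have := (hconv (T j)).2 hx hy ha hb hab
          simpa [smul_eq_mul] using this
        have hpsi := hΨ.2 hx hy ha hb hab
        simp only [smul_eq_mul] at hpsi ⊢
        have hml : (0:ℝ) ≤ (m:ℝ) * lam := mul_nonneg hmR.le hlam0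
        nlinarith [mul_le_mul_of_nonneg_left hpsi hml]
      have h1 := strong_min (hsc S) hu (hmin' S) hv
      have h2 := strong_min (hsc S') hv (hmin' S') hu
      rw [norm_sub_rev] at h2
      -- sum difference identity
      have hdiff : ∀ w' : EuclideanSpace ℝ (Fin d),
          (∑ j, f w' (S' j)) = (∑ j, f w' (S j)) - f w' (S i) + f w' z' := by
        intro w'
        have hup : ∀ j, f w' (S' j) = Function.update (fun j => f w' (S j)) i (f w' z') j :=
          fun j => Function.apply_update (fun _ t => f w' t) S i z' j
        rw [Finset.sum_congr rfl fun j _ => hup j,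
          Finset.sum_update_of_mem (Finset.mem_univ i), Finset.sdiff_singleton_eq_erase,
          ← Finset.sum_erase_add Finset.univ _ (Finset.mem_univ i)]
        ring
      have e1 := hdiff v
      have e2 := hdiff u
      have hl1 : f v (S i) - f u (S i) ≤ G * ‖u - v‖ := by
        have h := le_trans (le_abs_self _) (hlip (S i) v hv u hu)
        rwa [norm_sub_rev] at h
      have hl2 : f u z' - f v z' ≤ G * ‖u - v‖ :=
        le_trans (le_abs_self _) (hlip z' u hu v hv)
      have hq : (m:ℝ) * lam * ‖u - v‖ ^ 2 ≤ 2 * (G * ‖u - v‖) := by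
        nlinarith [h1, h2, e1, e2, hl1, hl2]
      rcases eq_or_lt_of_le (norm_nonneg (u - v)) with hzero | hpos
      · have huv : u = v := by
          rw [eq_comm, norm_eq_zero, sub_eq_zero] at hzero; exact hzero
        rw [huv]
        simp [mul_nonneg hlam0 hB.le]
      · have hr : (m:ℝ) * lam * ‖u - v‖ ≤ 2 * G := by
          have h' : (m:ℝ) * lam * ‖u - v‖ * ‖u - v‖ ≤ 2 * G * ‖u - v‖ := by
            nlinarith [hq]
          exact le_of_mul_le_mul_right h' hpos
        have hfz : f u z - f v z ≤ G * ‖u - v‖ :=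
          le_trans (le_abs_self _) (hlip z u hu v hv)
        have hmlpos : 0 < (m:ℝ) * lam := mul_pos hmR hlampos
        have hfin : ((m:ℝ) * lam) * (G * ‖u - v‖) ≤ ((m:ℝ) * lam) * (lam * B) := by
          nlinarith [mul_le_mul_of_nonneg_left hr hG, e0]
        have := le_of_mul_le_mul_left hfin hmlpos
        linarith
  -- measurability
  have hF1 : Measurable (fun p : (Fin m → Z) × Z => f (RERM p.1) p.2) :=
    hfmeas.comp ((hRERMmeas.comp measurable_fst).prodMk measurable_snd)
  have hF2 : ∀ i : Fin m,
      Measurable (fun p : (Fin m → Z) × Z => f (RERM (Function.update p.1 i p.2)) p.2) :=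
    fun i => hfmeas.comp ((hRERMmeas.comp measurable_update').prodMk measurable_snd)
  have hgmeas : ∀ i : Fin m, Measurable (fun S : Fin m → Z => f (RERM S) (S i)) :=
    fun i => hfmeas.comp (hRERMmeas.prodMk (measurable_pi_apply i))
  -- integrability
  have hIF1 : Integrable (fun p : (Fin m → Z) × Z => f (RERM p.1) p.2) PP :=
    integrable_of_bdd hF1 (fun p => hfbdd _ (hA p.1) p.2)
  have hIF2 : ∀ i : Fin m,
      Integrable (fun p : (Fin m → Z) × Z => f (RERM (Function.update p.1 i p.2)) p.2) PP :=
    fun i => integrable_of_bdd (hF2 i) (fun p => hfbdd _ (hA _) p.2)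
  have hIg : ∀ i : Fin m, Integrable (fun S : Fin m → Z => f (RERM S) (S i)) P :=
    fun i => integrable_of_bdd (hgmeas i) (fun S => hfbdd _ (hA S) (S i))
  -- (i) LHS as an integral over the product
  have hLHS : (∫ S : Fin m → Z, ∫ z, f (RERM S) z ∂μ ∂P) =
      ∫ p, f (RERM p.1) p.2 ∂PP := (integral_prod _ hIF1).symm
  -- (ii) exchange identity
  have hexch : ∀ i : Fin m, (∫ S, f (RERM S) (S i) ∂P) =
      ∫ p, f (RERM (Function.update p.1 i p.2)) p.2 ∂PP := by
    intro i
    have hmp := measurePreserving_update_fin μ i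
    rw [hPP, hP]
    conv_lhs => rw [← hmp.map_eq]
    rw [integral_map hmp.measurable.aemeasurable (hgmeas i).aestronglyMeasurable]
    exact integral_congr_ae (Filter.Eventually.of_forall fun p => by
      simp [Function.update_self])
  -- (iii) for fixed w, the expectation of one coordinate
  have hcoord : ∀ w ∈ W, ∀ i : Fin m, (∫ S, f w (S i) ∂P) = ∫ z, f w z ∂μ := by
    intro w hw i
    have hwmeas : Measurable (fun S : Fin m → Z => f w (S i)) :=
      hfmeas.comp (measurable_const.prodMk (measurable_pi_apply i))
    have hmp := measurePreserving_update_fin μ i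
    rw [hP, ← hmp.map_eq, integral_map hmp.measurable.aemeasurable hwmeas.aestronglyMeasurable]
    have heq : (∫ p : (Fin m → Z) × Z, f w (Function.update p.1 i p.2 i)
          ∂(Measure.pi fun _ : Fin m => μ).prod μ) =
        ∫ p : (Fin m → Z) × Z, f w p.2 ∂(Measure.pi fun _ : Fin m => μ).prod μ :=
      integral_congr_ae (Filter.Eventually.of_forall fun p => by simp)
    rw [heq]
    have hint : Integrable (fun p : (Fin m → Z) × Z => f w p.2)
        ((Measure.pi fun _ : Fin m => μ).prod μ) :=
      integrable_of_bdd (hfmeas.comp (measurable_const.prodMk measurable_snd))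
        (fun p => hfbdd _ hw p.2)
    rw [integral_prod _ hint]
    simp
  -- gap bound per coordinate
  have hgap : ∀ i : Fin m, (∫ p, f (RERM p.1) p.2 ∂PP) ≤
      (∫ S, f (RERM S) (S i) ∂P) + lam * B := by
    intro i
    rw [hexch i]
    have hmono : (∫ p, (f (RERM p.1) p.2 - f (RERM (Function.update p.1 i p.2)) p.2) ∂PP) ≤
        ∫ _, lam * B ∂PP :=
      integral_mono (hIF1.sub (hIF2 i)) (integrable_const _)
        (fun p => hstab p.1 i p.2 p.2)
    rw [integral_sub hIF1 (hIF2 i), integral_const, probReal_univ,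
      one_smul] at hmono
    linarith
  -- key bound for each w ∈ W
  have key : ∀ w ∈ W, (∫ S : Fin m → Z, ∫ z, f (RERM S) z ∂μ ∂P) ≤
      (∫ z, f w z ∂μ) + 2 * lam * B := by
    intro w hw
    rw [hLHS]
    set T1 := ∫ p, f (RERM p.1) p.2 ∂PP with hT1
    set F := ∫ z, f w z ∂μ with hF
    -- average of gap bounds
    have h1 : (m:ℝ) * T1 ≤ (∑ i : Fin m, ∫ S, f (RERM S) (S i) ∂P) + m * (lam * B) := by
      have hs := Finset.sum_le_sum (fun i (_ : i ∈ Finset.univ) => hgap i)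
      simp only [Finset.sum_add_distrib, Finset.sum_const, Finset.card_univ,
        Fintype.card_fin, nsmul_eq_mul] at hs
      linarith [hs]
    -- pointwise ERM inequality, integrated
    have hIsum : Integrable (fun S : Fin m → Z => ∑ i, f (RERM S) (S i)) P :=
      integrable_finset_sum _ (fun i _ => hIg i)
    have hIw : ∀ i : Fin m, Integrable (fun S : Fin m → Z => f w (S i)) P := fun i =>
      integrable_of_bdd
        (hfmeas.comp (measurable_const.prodMk (measurable_pi_apply i)))
        (fun S => hfbdd _ hw (S i))
    have hIsumw : Integrable (fun S : Fin m → Z => ∑ i, f w (S i)) P :=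
      integrable_finset_sum _ (fun i _ => hIw i)
    have hpt : ∀ S, (∑ i, f (RERM S) (S i)) ≤ (∑ i, f w (S i)) + (m:ℝ) * (lam * Ψ w) := by
      intro S
      have h := hmin' S w hw
      have h0 : 0 ≤ (m:ℝ) * (lam * Ψ (RERM S)) :=
        mul_nonneg hmR.le (mul_nonneg hlam0 (hΨbdd _ (hA S)).1)
      linarith
    have h2 : (∫ S, (∑ i, f (RERM S) (S i)) ∂P) ≤
        ∫ S, ((∑ i, f w (S i)) + (m:ℝ) * (lam * Ψ w)) ∂P :=
      integral_mono hIsum (hIsumw.add (integrable_const _)) hpt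
    rw [integral_add hIsumw (integrable_const _), integral_const, probReal_univ,
      one_smul, integral_finset_sum _ (fun i _ => hIg i),
      integral_finset_sum _ (fun i _ => hIw i)] at h2
    have hsumw : (∑ i : Fin m, ∫ S, f w (S i) ∂P) = (m:ℝ) * F := by
      rw [Finset.sum_congr rfl fun i _ => hcoord w hw i]
      simp [Finset.card_univ, mul_comm, hF]
    rw [hsumw] at h2
    have hΨwB : lam * Ψ w ≤ lam * B := mul_le_mul_of_nonneg_left (hΨbdd w hw).2 hlam0
    have hmain : (m:ℝ) * T1 ≤ (m:ℝ) * (F + 2 * lam * B) := by nlinarith [h1, h2, hΨwB]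
    exact le_of_mul_le_mul_left hmain hmR
  -- conclude
  haveI : Nonempty W := hWne.to_subtype
  have hsqrt : Real.sqrt (8 * G ^ 2 * B / m) = 2 * lam * B := by
    have h8 : (8 * G ^ 2 * B / m : ℝ) = (2 * B) ^ 2 * (2 * G ^ 2 / (m * B)) := by
      field_simp; ring
    rw [hlam, h8, Real.sqrt_mul (by positivity), Real.sqrt_sq (by positivity)]
    ring
  have hinf : (∫ S : Fin m → Z, ∫ z, f (RERM S) z ∂μ ∂P) - 2 * lam * B ≤
      ⨅ w : W, ∫ z, f (w : EuclideanSpace ℝ (Fin d)) z ∂μ :=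
    le_ciInf fun w => by linarith [key w.1 w.2]
  rw [hsqrt]
  linarith [hinf]
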